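/- Discrete H^{-1} evolution identity (equation (3.31) in the energy stability proof): Let Δt > 0, M > 0, β > 0. Let Ψ^n, Ψ^{n+1} be grid functions, W^{n+1/2} a grid function satisfying the discrete Neumann BC, and suppose Ψ^{n+1} - Ψ^n + βΔt Ψ^{n+1/2} = MΔt Δ_h W^{n+1/2} at all interior cells, where Ψ^{n+1/2} = (Ψ^{n+1} + Ψ^n)/2. Suppose η^n, η^{n+1} are grid functions satisfying the discrete Neumann BC with -Δ_h η^k = Ψ^k at all interior cells for k ∈ {n, n+1}, and set η^{n+1/2} = (η^{n+1} + η^n)/2. Then (1/(2M))(‖∇_h η^{n+1}‖^2 - ‖∇_h η^n‖^2) = -(β/M) Δt ‖∇_h η^{n+1/2}‖^2 - Δt (W^{n+1/2}, Ψ^{n+1/2})_m. -/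

import Mathlib

open Finset

/-- Discrete inner product `(f,g)_m` over interior cells `i = 1,...,Nx`, `j = 1,...,Ny`. -/
noncomputable def innerM (Nx Ny : ℕ) (hx hy : ℝ) (f g : ℕ → ℕ → ℝ) : ℝ :=
  ∑ i ∈ Finset.Icc 1 Nx, ∑ j ∈ Finset.Icc 1 Ny, hx * hy * f i j * g i j

/-- Discrete inner product `(u,v)_x` for x-edge arrays; index `i` stands for `i + 1/2`. -/
noncomputable def innerX (Nx Ny : ℕ) (hx hy : ℝ) (u v : ℕ → ℕ → ℝ) : ℝ :=
  ∑ i ∈ Finset.Icc 1 (Nx - 1), ∑ j ∈ Finset.Icc 1 Ny, hx * hy * u i j * v i j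

/-- Discrete inner product `(u,v)_y` for y-edge arrays; index `j` stands for `j + 1/2`. -/
noncomputable def innerY (Nx Ny : ℕ) (hx hy : ℝ) (u v : ℕ → ℕ → ℝ) : ℝ :=
  ∑ i ∈ Finset.Icc 1 Nx, ∑ j ∈ Finset.Icc 1 (Ny - 1), hx * hy * u i j * v i j

/-- `[d_x g]_{i+1/2, j}`, stored at index `(i, j)`. -/
noncomputable def dX (hx : ℝ) (g : ℕ → ℕ → ℝ) : ℕ → ℕ → ℝ := fun i j => (g (i + 1) j - g i j) / hx

/-- `[d_y g]_{i, j+1/2}`, stored at index `(i, j)`. -/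
noncomputable def dY (hy : ℝ) (g : ℕ → ℕ → ℝ) : ℕ → ℕ → ℝ := fun i j => (g i (j + 1) - g i j) / hy

/-- `[D_x w]_{i,j} = (w_{i+1/2,j} - w_{i-1/2,j})/h_x` for an x-edge array `w`. -/
noncomputable def DX (hx : ℝ) (w : ℕ → ℕ → ℝ) : ℕ → ℕ → ℝ := fun i j => (w i j - w (i - 1) j) / hx

/-- `[D_y w]_{i,j} = (w_{i,j+1/2} - w_{i,j-1/2})/h_y` for a y-edge array `w`. -/
noncomputable def DY (hy : ℝ) (w : ℕ → ℕ → ℝ) : ℕ → ℕ → ℝ := fun i j => (w i j - w i (j - 1)) / hy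

/-- Five-point discrete Laplacian `[Δ_h g]_{i,j}` (meaningful at interior cells). -/
noncomputable def lapH (hx hy : ℝ) (g : ℕ → ℕ → ℝ) : ℕ → ℕ → ℝ := fun i j =>
  (g (i + 1) j - 2 * g i j + g (i - 1) j) / hx ^ 2 +
  (g i (j + 1) - 2 * g i j + g i (j - 1)) / hy ^ 2

/-- The discrete homogeneous Neumann boundary condition for a grid function. -/
noncomputable def NeumannBC (Nx Ny : ℕ) (g : ℕ → ℕ → ℝ) : Prop :=
  (∀ j ∈ Finset.Icc 1 Ny, g 0 j = g 1 j ∧ g (Nx + 1) j = g Nx j) ∧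
  (∀ i ∈ Finset.Icc 1 Nx, g i 0 = g i 1 ∧ g i (Ny + 1) = g i Ny)

/-- Extension of interior data to ghost cells via the discrete Neumann BC
(clamping of indices to the interior range). -/
noncomputable def extN (Nx Ny : ℕ) (u : ℕ → ℕ → ℝ) : ℕ → ℕ → ℝ := fun i j =>
  u (min (max i 1) Nx) (min (max j 1) Ny)

/-- `‖∇_h g‖² = (d_x g, d_x g)_x + (d_y g, d_y g)_y`. -/
noncomputable def gradSq (Nx Ny : ℕ) (hx hy : ℝ) (g : ℕ → ℕ → ℝ) : ℝ :=
  innerX Nx Ny hx hy (dX hx g) (dX hx g) + innerY Nx Ny hx hy (dY hy g) (dY hy g)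

/-- `Δ_h² g`, where `Δ_h g` is extended to ghost cells via its own Neumann BC. -/
noncomputable def lap2H (Nx Ny : ℕ) (hx hy : ℝ) (g : ℕ → ℕ → ℝ) : ℕ → ℕ → ℝ :=
  lapH hx hy (extN Nx Ny (lapH hx hy g))

/-- `Δ_h³ g`, where `Δ_h g`, `Δ_h² g` are extended to ghost cells via their own Neumann BC. -/
noncomputable def lap3H (Nx Ny : ℕ) (hx hy : ℝ) (g : ℕ → ℕ → ℝ) : ℕ → ℕ → ℝ :=
  lapH hx hy (extN Nx Ny (lap2H Nx Ny hx hy g))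

/-- Discrete energy `E_1^h(g) = Σ h_x h_y F(g_{ij})` with `F(s) = s⁴/4`. -/
noncomputable def E1h (Nx Ny : ℕ) (hx hy : ℝ) (g : ℕ → ℕ → ℝ) : ℝ :=
  ∑ i ∈ Finset.Icc 1 Nx, ∑ j ∈ Finset.Icc 1 Ny, hx * hy * (g i j ^ 4 / 4)



private lemma abel_sum (d f : ℕ → ℝ) (n : ℕ) :
    ∑ i ∈ Finset.Icc 1 (n+1), (d (i-1) - d i) * f i
      = d 0 * f 1 - d (n+1) * f (n+1) + ∑ i ∈ Finset.Icc 1 n, d i * (f (i+1) - f i) := by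
  induction n with
  | zero => simp; ring
  | succ m ih =>
    rw [Finset.sum_Icc_succ_top (by omega : 1 ≤ m+1+1), ih,
        Finset.sum_Icc_succ_top (by omega : 1 ≤ m+1)]
    simp only [Nat.add_sub_cancel]
    ring

private lemma sbp1 (N : ℕ) (hN : 1 ≤ N) (a f : ℕ → ℝ)
    (h0 : a 0 = a 1) (h1 : a (N+1) = a N) :
    ∑ i ∈ Finset.Icc 1 N, (2 * a i - a (i+1) - a (i-1)) * f i
      = ∑ i ∈ Finset.Icc 1 (N-1), (a (i+1) - a i) * (f (i+1) - f i) := by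
  obtain ⟨m, rfl⟩ : ∃ m, N = m + 1 := ⟨N - 1, by omega⟩
  have hcong : ∑ i ∈ Finset.Icc 1 (m+1), (2 * a i - a (i+1) - a (i-1)) * f i
      = ∑ i ∈ Finset.Icc 1 (m+1), ((fun k => a (k+1) - a k) (i-1) - (fun k => a (k+1) - a k) i) * f i := by
    refine Finset.sum_congr rfl fun i hi => ?_
    have hi' : 1 ≤ i := (Finset.mem_Icc.mp hi).1
    have h : i - 1 + 1 = i := by omega
    simp only [h]
    ring
  rw [hcong, abel_sum (fun k => a (k+1) - a k) f m]
  simp only [Nat.add_sub_cancel, h0, h1]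
  simp [h1]

private lemma sbp2 (Nx Ny : ℕ) (hNx : 1 ≤ Nx) (hNy : 1 ≤ Ny)
    (hx hy : ℝ) (hhx : hx ≠ 0) (hhy : hy ≠ 0)
    (g f : ℕ → ℕ → ℝ) (hg : NeumannBC Nx Ny g) :
    innerM Nx Ny hx hy (fun i j => -lapH hx hy g i j) f
      = innerX Nx Ny hx hy (dX hx g) (dX hx f) + innerY Nx Ny hx hy (dY hy g) (dY hy f) := by
  have hxrow : ∀ j ∈ Finset.Icc 1 Ny,
      ∑ i ∈ Finset.Icc 1 Nx, (hy/hx) * ((2*g i j - g (i+1) j - g (i-1) j) * f i j)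
        = ∑ i ∈ Finset.Icc 1 (Nx-1), hx * hy * dX hx g i j * dX hx f i j := by
    intro j hj
    rw [← Finset.mul_sum,
        sbp1 Nx hNx (fun i => g i j) (fun i => f i j) ((hg.1 j hj).1) ((hg.1 j hj).2),
        Finset.mul_sum]
    refine Finset.sum_congr rfl fun i _ => ?_
    simp only [dX]
    field_simp
  have hycol : ∀ i ∈ Finset.Icc 1 Nx,
      ∑ j ∈ Finset.Icc 1 Ny, (hx/hy) * ((2*g i j - g i (j+1) - g i (j-1)) * f i j)
        = ∑ j ∈ Finset.Icc 1 (Ny-1), hx * hy * dY hy g i j * dY hy f i j := by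
    intro i hi
    rw [← Finset.mul_sum,
        sbp1 Ny hNy (fun j => g i j) (fun j => f i j) ((hg.2 i hi).1) ((hg.2 i hi).2),
        Finset.mul_sum]
    refine Finset.sum_congr rfl fun j _ => ?_
    simp only [dY]
    field_simp
  calc innerM Nx Ny hx hy (fun i j => -lapH hx hy g i j) f
      = (∑ i ∈ Finset.Icc 1 Nx, ∑ j ∈ Finset.Icc 1 Ny,
            (hy/hx) * ((2*g i j - g (i+1) j - g (i-1) j) * f i j))
        + ∑ i ∈ Finset.Icc 1 Nx, ∑ j ∈ Finset.Icc 1 Ny,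
            (hx/hy) * ((2*g i j - g i (j+1) - g i (j-1)) * f i j) := by
        unfold innerM lapH
        rw [← Finset.sum_add_distrib]
        refine Finset.sum_congr rfl fun i _ => ?_
        rw [← Finset.sum_add_distrib]
        refine Finset.sum_congr rfl fun j _ => ?_
        field_simp
        ring
    _ = innerX Nx Ny hx hy (dX hx g) (dX hx f) + innerY Nx Ny hx hy (dY hy g) (dY hy f) := by
        unfold innerX innerY
        congr 1
        · calc ∑ i ∈ Finset.Icc 1 Nx, ∑ j ∈ Finset.Icc 1 Ny,
                (hy/hx) * ((2*g i j - g (i+1) j - g (i-1) j) * f i j)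
              = ∑ j ∈ Finset.Icc 1 Ny, ∑ i ∈ Finset.Icc 1 Nx,
                (hy/hx) * ((2*g i j - g (i+1) j - g (i-1) j) * f i j) := Finset.sum_comm
            _ = ∑ j ∈ Finset.Icc 1 Ny, ∑ i ∈ Finset.Icc 1 (Nx-1),
                hx * hy * dX hx g i j * dX hx f i j := Finset.sum_congr rfl hxrow
            _ = ∑ i ∈ Finset.Icc 1 (Nx-1), ∑ j ∈ Finset.Icc 1 Ny,
                hx * hy * dX hx g i j * dX hx f i j := Finset.sum_comm
        · exact Finset.sum_congr rfl hycol

private lemma innerM_congr_left (Nx Ny : ℕ) (hx hy : ℝ) (f f' g : ℕ → ℕ → ℝ)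
    (h : ∀ i ∈ Finset.Icc 1 Nx, ∀ j ∈ Finset.Icc 1 Ny, f i j = f' i j) :
    innerM Nx Ny hx hy f g = innerM Nx Ny hx hy f' g := by
  unfold innerM
  exact Finset.sum_congr rfl fun i hi => Finset.sum_congr rfl fun j hj => by rw [h i hi j hj]

private lemma innerM_comm (Nx Ny : ℕ) (hx hy : ℝ) (f g : ℕ → ℕ → ℝ) :
    innerM Nx Ny hx hy f g = innerM Nx Ny hx hy g f := by
  unfold innerM
  exact Finset.sum_congr rfl fun i _ => Finset.sum_congr rfl fun j _ => by ring

theorem discrete_Hminus1_evolution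
    (Nx Ny : ℕ) (hNx : 1 ≤ Nx) (hNy : 1 ≤ Ny)
    (hx hy : ℝ) (hhx : 0 < hx) (hhy : 0 < hy)
    (Δt M β : ℝ) (hΔt : 0 < Δt) (hM : 0 < M) (hβ : 0 < β)
    (Ψn Ψp W ηn ηp : ℕ → ℕ → ℝ)
    (hW : NeumannBC Nx Ny W)
    (heq : ∀ i ∈ Finset.Icc 1 Nx, ∀ j ∈ Finset.Icc 1 Ny,
      Ψp i j - Ψn i j + β * Δt * ((Ψp i j + Ψn i j) / 2) = M * Δt * lapH hx hy W i j)
    (hηn : NeumannBC Nx Ny ηn) (hηp : NeumannBC Nx Ny ηp)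
    (hηΨn : ∀ i ∈ Finset.Icc 1 Nx, ∀ j ∈ Finset.Icc 1 Ny, -lapH hx hy ηn i j = Ψn i j)
    (hηΨp : ∀ i ∈ Finset.Icc 1 Nx, ∀ j ∈ Finset.Icc 1 Ny, -lapH hx hy ηp i j = Ψp i j) :
    1 / (2 * M) * (gradSq Nx Ny hx hy ηp - gradSq Nx Ny hx hy ηn) =
      -(β / M) * Δt * gradSq Nx Ny hx hy (fun i j => (ηp i j + ηn i j) / 2)
      - Δt * innerM Nx Ny hx hy W (fun i j => (Ψp i j + Ψn i j) / 2) := by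
  have hxne : hx ≠ 0 := ne_of_gt hhx
  have hyne : hy ≠ 0 := ne_of_gt hhy
  have hMne : M ≠ 0 := ne_of_gt hM
  set η2 : ℕ → ℕ → ℝ := fun i j => (ηp i j + ηn i j) / 2 with hη2def
  set Ψ2 : ℕ → ℕ → ℝ := fun i j => (Ψp i j + Ψn i j) / 2 with hΨ2def
  set D : ℕ → ℕ → ℝ := fun i j => ηp i j - ηn i j with hDdef
  have hη2 : NeumannBC Nx Ny η2 :=
    ⟨fun j hj => ⟨by simp only [hη2def, (hηp.1 j hj).1, (hηn.1 j hj).1],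
                  by simp only [hη2def, (hηp.1 j hj).2, (hηn.1 j hj).2]⟩,
     fun i hi => ⟨by simp only [hη2def, (hηp.2 i hi).1, (hηn.2 i hi).1],
                  by simp only [hη2def, (hηp.2 i hi).2, (hηn.2 i hi).2]⟩⟩
  have hD : NeumannBC Nx Ny D :=
    ⟨fun j hj => ⟨by simp only [hDdef, (hηp.1 j hj).1, (hηn.1 j hj).1],
                  by simp only [hDdef, (hηp.1 j hj).2, (hηn.1 j hj).2]⟩,
     fun i hi => ⟨by simp only [hDdef, (hηp.2 i hi).1, (hηn.2 i hi).1],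
                  by simp only [hDdef, (hηp.2 i hi).2, (hηn.2 i hi).2]⟩⟩
  -- pointwise: Ψ2 = -Δ_h η2 on the interior
  have hmid : ∀ i ∈ Finset.Icc 1 Nx, ∀ j ∈ Finset.Icc 1 Ny,
      Ψ2 i j = -lapH hx hy η2 i j := by
    intro i hi j hj
    have hlin : lapH hx hy η2 i j = (lapH hx hy ηp i j + lapH hx hy ηn i j) / 2 := by
      simp only [hη2def, lapH]; ring
    rw [hlin, hΨ2def]
    linear_combination (-(1:ℝ)/2) * hηΨp i hi j hj + (-(1:ℝ)/2) * hηΨn i hi j hj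
  -- E1
  have E1 : innerM Nx Ny hx hy (fun i j => Ψp i j - Ψn i j) η2
      = (gradSq Nx Ny hx hy ηp - gradSq Nx Ny hx hy ηn) / 2 := by
    have h1 : innerM Nx Ny hx hy (fun i j => Ψp i j - Ψn i j) η2
        = innerM Nx Ny hx hy (fun i j => -lapH hx hy D i j) η2 := by
      refine innerM_congr_left Nx Ny hx hy _ _ _ fun i hi j hj => ?_
      have hlin : lapH hx hy D i j = lapH hx hy ηp i j - lapH hx hy ηn i j := by
        simp only [hDdef, lapH]; ring
      rw [hlin, ← hηΨp i hi j hj, ← hηΨn i hi j hj]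
      ring
    rw [h1, sbp2 Nx Ny hNx hNy hx hy hxne hyne D η2 hD]
    unfold gradSq
    have px : innerX Nx Ny hx hy (dX hx D) (dX hx η2)
        = (innerX Nx Ny hx hy (dX hx ηp) (dX hx ηp)
           - innerX Nx Ny hx hy (dX hx ηn) (dX hx ηn)) / 2 := by
      unfold innerX
      rw [eq_div_iff (by norm_num : (2:ℝ) ≠ 0), ← Finset.sum_sub_distrib, Finset.sum_mul]
      refine Finset.sum_congr rfl fun i _ => ?_
      rw [← Finset.sum_sub_distrib, Finset.sum_mul]
      refine Finset.sum_congr rfl fun j _ => ?_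
      simp only [hDdef, hη2def, dX]
      field_simp
      ring
    have py : innerY Nx Ny hx hy (dY hy D) (dY hy η2)
        = (innerY Nx Ny hx hy (dY hy ηp) (dY hy ηp)
           - innerY Nx Ny hx hy (dY hy ηn) (dY hy ηn)) / 2 := by
      unfold innerY
      rw [eq_div_iff (by norm_num : (2:ℝ) ≠ 0), ← Finset.sum_sub_distrib, Finset.sum_mul]
      refine Finset.sum_congr rfl fun i _ => ?_
      rw [← Finset.sum_sub_distrib, Finset.sum_mul]
      refine Finset.sum_congr rfl fun j _ => ?_
      simp only [hDdef, hη2def, dY]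
      field_simp
      ring
    rw [px, py]
    ring
  -- E2
  have E2 : innerM Nx Ny hx hy Ψ2 η2 = gradSq Nx Ny hx hy η2 := by
    rw [innerM_congr_left Nx Ny hx hy Ψ2 (fun i j => -lapH hx hy η2 i j) η2 hmid,
        sbp2 Nx Ny hNx hNy hx hy hxne hyne η2 η2 hη2]
    rfl
  -- E3
  have E3 : innerM Nx Ny hx hy (fun i j => lapH hx hy W i j) η2
      = -(innerM Nx Ny hx hy W Ψ2) := by
    have h6 : innerM Nx Ny hx hy (fun i j => lapH hx hy W i j) η2
        = -(innerM Nx Ny hx hy (fun i j => -lapH hx hy W i j) η2) := by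
      unfold innerM
      simp only [mul_neg, neg_mul, Finset.sum_neg_distrib, neg_neg]
    have h3 : innerX Nx Ny hx hy (dX hx W) (dX hx η2) + innerY Nx Ny hx hy (dY hy W) (dY hy η2)
        = innerX Nx Ny hx hy (dX hx η2) (dX hx W) + innerY Nx Ny hx hy (dY hy η2) (dY hy W) := by
      unfold innerX innerY
      congr 1 <;>
        exact Finset.sum_congr rfl fun i _ => Finset.sum_congr rfl fun j _ => by ring
    have h4 : innerM Nx Ny hx hy (fun i j => -lapH hx hy η2 i j) W
        = innerM Nx Ny hx hy Ψ2 W :=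
      (innerM_congr_left Nx Ny hx hy Ψ2 (fun i j => -lapH hx hy η2 i j) W hmid).symm
    rw [h6, sbp2 Nx Ny hNx hNy hx hy hxne hyne W η2 hW, h3,
        ← sbp2 Nx Ny hNx hNy hx hy hxne hyne η2 W hη2, h4, innerM_comm]
  -- E0 : summed evolution equation
  have E0 : innerM Nx Ny hx hy (fun i j => Ψp i j - Ψn i j) η2
      + β * Δt * innerM Nx Ny hx hy Ψ2 η2
      = M * Δt * innerM Nx Ny hx hy (fun i j => lapH hx hy W i j) η2 := by
    unfold innerM
    simp only [Finset.mul_sum]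
    rw [← Finset.sum_add_distrib]
    refine Finset.sum_congr rfl fun i hi => ?_
    rw [← Finset.sum_add_distrib]
    refine Finset.sum_congr rfl fun j hj => ?_
    have h := heq i hi j hj
    simp only [hΨ2def]
    linear_combination (hx * hy * η2 i j) * h
  rw [E1, E2, E3] at E0
  have hgoal : gradSq Nx Ny hx hy ηp - gradSq Nx Ny hx hy ηn
      = -2 * β * Δt * gradSq Nx Ny hx hy η2 - 2 * M * Δt * innerM Nx Ny hx hy W Ψ2 := by
    linarith [E0]
  rw [hgoal]
  field_simp
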